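/- Let n = 3 and let V be a set of monomials of degree d in K[x_1,x_2,x_3] with u = gcd(V). If every monomial w of degree d not in V is a fixed empty element of V for some i ∈ {1,2,3}, and |V| > C(d - deg(u) + 1, 2), then V is a Gotzmann set. -/
import Mathlib


open Finset

/-- Monomials of `K[x_1,…,x_n]` are encoded as exponent vectors `Fin n → ℕ`.
`mulVarsOn S W = {x_j · w : w ∈ W, j ∈ S}`. -/
def mulVarsOn {n : ℕ} (S : Finset (Fin n)) (W : Finset (Fin n → ℕ)) :
    Finset (Fin n → ℕ) :=
  W.biUnion fun v => S.image fun j => v + Pi.single j 1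

/-- `MV = {x_j · v : v ∈ V, 1 ≤ j ≤ n}`. -/
def mulVars {n : ℕ} (W : Finset (Fin n → ℕ)) : Finset (Fin n → ℕ) :=
  mulVarsOn Finset.univ W

/-- `IsBinRep m h p f` says that `h = ∑_{j=p}^{m} C(f j + j, j)` is the `m`-th
binomial representation of `h`: `1 ≤ p ≤ m` and `f` is weakly increasing on `[p,m]`. -/
def IsBinRep (m h p : ℕ) (f : ℕ → ℕ) : Prop :=
  1 ≤ p ∧ p ≤ m ∧ (∀ j k, p ≤ j → j ≤ k → k ≤ m → f j ≤ f k) ∧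
    h = ∑ j ∈ Finset.Icc p m, Nat.choose (f j + j) j

/-- `h^{<m>} = ∑_{j=p}^{m} C(f j + j + 1, j)` for the `m`-th binomial representation `(p, f)`. -/
def upVal (m p : ℕ) (f : ℕ → ℕ) : ℕ :=
  ∑ j ∈ Finset.Icc p m, Nat.choose (f j + j + 1) j

/-- `h_{<<m>>} = ∑_{j=p}^{m} C(f j + j - 1, j - 1)` for the `m`-th binomial representation `(p, f)`. -/
def downVal (m p : ℕ) (f : ℕ → ℕ) : ℕ :=
  ∑ j ∈ Finset.Icc p m, Nat.choose (f j + j - 1) (j - 1)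

/-- `W` is a Gotzmann set with respect to the set of variables `S`:
either `W = ∅`, or (in at most one variable) `|SW| = |W|`, or
`|SW| = |W|^{<|S|-1>}` computed from the `(|S|-1)`-th binomial representation of `|W|`. -/
def IsGotzmannOn {n : ℕ} (S : Finset (Fin n)) (W : Finset (Fin n → ℕ)) : Prop :=
  W = ∅ ∨ (S.card ≤ 1 ∧ (mulVarsOn S W).card = W.card) ∨
    ∃ p f, IsBinRep (S.card - 1) W.card p f ∧
      (mulVarsOn S W).card = upVal (S.card - 1) p f

/-- `V` is a Gotzmann set of monomials of `K[x_1,…,x_n]`: `|MV| = |V|^{<n-1>}`. -/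
def IsGotzmann {n : ℕ} (W : Finset (Fin n → ℕ)) : Prop :=
  IsGotzmannOn Finset.univ W

/-- The exponent vector of `gcd(V)` (pointwise minimum of the exponent vectors). -/
noncomputable def gcdMon {n : ℕ} (V : Finset (Fin n → ℕ)) : Fin n → ℕ :=
  fun j => sInf ((fun v => v j) '' (V : Set (Fin n → ℕ)))

/-- `w` comes strictly earlier than `v` in the lexicographic order on monomials
(`x_1 > x_2 > … > x_n`, larger exponent vector comes earlier). -/
def lexEarlier {n : ℕ} (w v : Fin n → ℕ) : Prop :=
  ∃ i : Fin n, (∀ j, j < i → w j = v j) ∧ v i < w i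

/-- `V` is a lexsegment set of monomials of degree `d`: an initial segment of
the monomials of degree `d` in lexicographic order. -/
def IsLexSegment (n d : ℕ) (V : Finset (Fin n → ℕ)) : Prop :=
  (∀ v ∈ V, ∑ j, v j = d) ∧
    ∀ v ∈ V, ∀ w : Fin n → ℕ, (∑ j, w j = d) → lexEarlier w v → w ∈ V

/-- `V` is strongly stable: for `u ∈ V`, `i < j` with `x_j ∣ u`, also `(x_i/x_j)·u ∈ V`. -/
def IsStronglyStable {n : ℕ} (V : Finset (Fin n → ℕ)) : Prop :=
  ∀ u ∈ V, ∀ i j : Fin n, i < j → 0 < u j →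
    (u + Pi.single i 1 - Pi.single j 1) ∈ V

/-- `u` is a fixed empty element of `V` (of degree `d`) for `i`: no monomial of
degree `d` which is under `u` for `i` (all exponents except possibly the `i`-th
bounded by those of `u`) belongs to `V`. -/
def IsFEE (n d : ℕ) (V : Finset (Fin n → ℕ)) (i : Fin n) (u : Fin n → ℕ) : Prop :=
  u ∉ V ∧ ∀ v : Fin n → ℕ, (∑ j, v j = d) → (∀ j, j ≠ i → v j ≤ u j) → v ∉ V

namespace GotzFee

variable (u : Fin 3 → ℕ)

/-- chart into the simplex `{x ≥ u, deg x = m}` -/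
def chart (m : ℕ) (p : ℕ × ℕ) : Fin 3 → ℕ :=
  fun t => if t = 0 then u 0 + p.1 else if t = 1 then u 1 + p.2
    else m - (u 0 + p.1) - (u 1 + p.2)

def Spx (m : ℕ) : Finset (Fin 3 → ℕ) :=
  (((range (m+1)) ×ˢ (range (m+1))).filter
     (fun p => u 0 + p.1 + (u 1 + p.2) + u 2 ≤ m)).image (chart u m)

lemma mem_Spx {m : ℕ} {x : Fin 3 → ℕ} :
    x ∈ Spx u m ↔ (∀ t, u t ≤ x t) ∧ ∑ t, x t = m := by
  constructor
  · intro hx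
    simp only [Spx, mem_image, mem_filter, mem_product, mem_range] at hx
    obtain ⟨p, ⟨⟨h1, h2⟩, h3⟩, rfl⟩ := hx
    have e0 : chart u m p 0 = u 0 + p.1 := by simp [chart]
    have e1 : chart u m p 1 = u 1 + p.2 := by simp [chart]
    have e2 : chart u m p 2 = m - (u 0 + p.1) - (u 1 + p.2) := by simp [chart]
    constructor
    · intro t
      fin_cases t <;> simp [chart] <;> omega
    · rw [Fin.sum_univ_three, e0, e1, e2]; omega
  · rintro ⟨h1, h2⟩
    rw [Fin.sum_univ_three] at h2
    simp only [Spx, mem_image, mem_filter, mem_product, mem_range]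
    refine ⟨(x 0 - u 0, x 1 - u 1), ⟨⟨?_, ?_⟩, ?_⟩, ?_⟩
    · have := h1 0; omega
    · have := h1 1; omega
    · have := h1 0; have := h1 1; have := h1 2; omega
    · funext t
      have h0 := h1 0; have hh1 := h1 1; have hh2 := h1 2
      fin_cases t <;> simp [chart] <;> omega

lemma sum_tri (M : ℕ) : ∑ a ∈ range (M+1), (M+1 - a) = (M+2).choose 2 := by
  induction M with
  | zero => simp
  | succ M ih =>
    have key : ∑ a ∈ range (M+1+1), (M+1+1-a)
        = (∑ a ∈ range (M+1), (M+1-a)) + (M+1) + 1 := by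
      rw [Finset.sum_range_succ]
      have h1 : ∑ a ∈ range (M+1), (M+1+1-a) = ∑ a ∈ range (M+1), ((M+1-a) + 1) :=
        Finset.sum_congr rfl (fun a ha => by rw [Finset.mem_range] at ha; omega)
      rw [h1, Finset.sum_add_distrib, Finset.sum_const, Finset.card_range, smul_eq_mul,
        mul_one]
      omega
    rw [key, ih]
    have h2 : (M+1+2).choose 2 = (M+2).choose 1 + (M+2).choose 2 :=
      Nat.choose_succ_succ (M+2) 1
    rw [Nat.choose_one_right] at h2
    omega

lemma tri_card (M : ℕ) :
    (((range (M+1)) ×ˢ (range (M+1))).filter (fun p : ℕ × ℕ => p.1 + p.2 ≤ M)).card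
      = (M+2).choose 2 := by
  have hset : (((range (M+1)) ×ˢ (range (M+1))).filter (fun p : ℕ × ℕ => p.1 + p.2 ≤ M))
      = (range (M+1)).biUnion (fun a => {a} ×ˢ range (M+1 - a)) := by
    ext ⟨a, b⟩
    simp only [mem_filter, mem_product, mem_range, mem_biUnion, mem_singleton]
    constructor
    · rintro ⟨⟨h1, h2⟩, h3⟩; exact ⟨a, by omega, rfl, by omega⟩
    · rintro ⟨c, hc, h1, h2⟩; omega
  rw [hset, Finset.card_biUnion]
  · calc (∑ a ∈ range (M+1), ({a} ×ˢ range (M+1-a)).card)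
        = ∑ a ∈ range (M+1), (M+1-a) := by
          apply Finset.sum_congr rfl; intro a _; simp
      _ = (M+2).choose 2 := sum_tri M
  · intro a _ b _ hab
    simp only [Finset.disjoint_left, Finset.mem_product, Finset.mem_singleton,
      Finset.mem_range]
    rintro ⟨c, e⟩ ⟨h1, _⟩ ⟨h2, _⟩
    exact hab (h1 ▸ h2 ▸ rfl)

lemma Spx_card {m : ℕ} (h : u 0 + u 1 + u 2 ≤ m) :
    (Spx u m).card = (m - (u 0 + u 1 + u 2) + 2).choose 2 := by
  set E := u 0 + u 1 + u 2 with hE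
  rw [Spx, Finset.card_image_of_injOn]
  · have hset : (((range (m+1)) ×ˢ (range (m+1))).filter
        (fun p : ℕ × ℕ => u 0 + p.1 + (u 1 + p.2) + u 2 ≤ m))
        = (((range ((m - E)+1)) ×ˢ (range ((m - E)+1))).filter
            (fun p : ℕ × ℕ => p.1 + p.2 ≤ m - E)) := by
      ext ⟨a, b⟩
      simp only [mem_filter, mem_product, mem_range]
      omega
    rw [hset, tri_card]
  · intro p hp q hq hpq
    have e0 : chart u m p 0 = u 0 + p.1 := by simp [chart]
    have e1 : chart u m p 1 = u 1 + p.2 := by simp [chart]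
    have f0 : chart u m q 0 = u 0 + q.1 := by simp [chart]
    have f1 : chart u m q 1 = u 1 + q.2 := by simp [chart]
    have h0 : chart u m p 0 = chart u m q 0 := by rw [hpq]
    have h1 : chart u m p 1 = chart u m q 1 := by rw [hpq]
    rw [e0, f0] at h0; rw [e1, f1] at h1
    exact Prod.ext (by omega) (by omega)

def o1 : Fin 3 → Fin 3 := ![1, 0, 0]
def o2 : Fin 3 → Fin 3 := ![2, 2, 1]

lemma o1_ne : ∀ i : Fin 3, o1 i ≠ i := by decide
lemma o2_ne : ∀ i : Fin 3, o2 i ≠ i := by decide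
lemma o1_ne_o2 : ∀ i : Fin 3, o1 i ≠ o2 i := by decide
lemma mem_o : ∀ i t : Fin 3, t = i ∨ t = o1 i ∨ t = o2 i := by decide
lemma fin3cases : ∀ t : Fin 3, t = 0 ∨ t = 1 ∨ t = 2 := by decide

lemma sum3 (f : Fin 3 → ℕ) (i : Fin 3) : ∑ t, f t = f i + f (o1 i) + f (o2 i) := by
  fin_cases i <;> simp [o1, o2, Fin.sum_univ_three] <;> ring

variable (d : ℕ)

def Box (i : Fin 3) (c : Fin 3 → ℕ) : Finset (Fin 3 → ℕ) :=
  (Spx u d).filter (fun x => ∀ t, t ≠ i → x t ≤ c t)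

lemma box_subset_spx (i : Fin 3) (c : Fin 3 → ℕ) : Box u d i c ⊆ Spx u d :=
  Finset.filter_subset _ _

def Lpath (i : Fin 3) (c : Fin 3 → ℕ) (r : ℕ) : Fin 3 → ℕ :=
  fun t => if t = o1 i then u t + min r (c (o1 i) - u (o1 i))
    else if t = o2 i then u t + (r - min r (c (o1 i) - u (o1 i)))
    else d - (u (o1 i) + min r (c (o1 i) - u (o1 i)))
      - (u (o2 i) + (r - min r (c (o1 i) - u (o1 i))))

lemma box_lb (i : Fin 3) (c : Fin 3 → ℕ) (hc : c ∈ Spx u d) :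
    d - (u 0 + u 1 + u 2) + 1 ≤ (Box u d i c).card + (c i - u i) := by
  obtain ⟨hcu, hcs⟩ := (mem_Spx u).1 hc
  have hji : o1 i ≠ i := o1_ne i
  have hki : o2 i ≠ i := o2_ne i
  have hjk : o1 i ≠ o2 i := o1_ne_o2 i
  have ej : ∀ r, Lpath u d i c r (o1 i) = u (o1 i) + min r (c (o1 i) - u (o1 i)) :=
    fun r => by simp [Lpath]
  have ek : ∀ r, Lpath u d i c r (o2 i)
      = u (o2 i) + (r - min r (c (o1 i) - u (o1 i))) :=
    fun r => by simp [Lpath, hjk.symm]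
  have ei : ∀ r, Lpath u d i c r i
      = d - (u (o1 i) + min r (c (o1 i) - u (o1 i)))
        - (u (o2 i) + (r - min r (c (o1 i) - u (o1 i)))) :=
    fun r => by simp [Lpath, Ne.symm hji, Ne.symm hki]
  have hcsum : c i + c (o1 i) + c (o2 i) = d := by rw [← sum3 c i, hcs]
  have husum : u 0 + u 1 + u 2 = u i + u (o1 i) + u (o2 i) := by
    have := sum3 u i; rw [Fin.sum_univ_three] at this; omega
  have hcuj := hcu (o1 i); have hcuk := hcu (o2 i); have hcui := hcu i
  set a := c (o1 i) - u (o1 i) with ha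
  set b := c (o2 i) - u (o2 i) with hb
  have hmem : ∀ r ∈ range (a+b+1), Lpath u d i c r ∈ Box u d i c := by
    intro r hr
    rw [Finset.mem_range] at hr
    rw [Box, Finset.mem_filter]
    constructor
    · rw [mem_Spx]
      constructor
      · intro t
        rcases mem_o i t with rfl | rfl | rfl
        · rw [ei]; omega
        · rw [ej]; omega
        · rw [ek]; omega
      · rw [sum3 _ i, ei, ej, ek]; omega
    · intro t ht
      rcases mem_o i t with rfl | rfl | rfl
      · exact absurd rfl ht
      · rw [ej]; omega
      · rw [ek]; omega
  have hinj : Set.InjOn (Lpath u d i c) (range (a+b+1)) := by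
    intro r hr r' hr' hrr
    have h1 : Lpath u d i c r (o1 i) = Lpath u d i c r' (o1 i) := by rw [hrr]
    have h2 : Lpath u d i c r (o2 i) = Lpath u d i c r' (o2 i) := by rw [hrr]
    rw [ej, ej] at h1; rw [ek, ek] at h2
    simp only [Finset.coe_range, Set.mem_Iio] at hr hr'
    omega
  have hsub : (range (a+b+1)).image (Lpath u d i c) ⊆ Box u d i c := by
    intro x hx
    rw [Finset.mem_image] at hx
    obtain ⟨r, hr, rfl⟩ := hx
    exact hmem r hr
  have hcard : ((range (a+b+1)).image (Lpath u d i c)).card = a+b+1 := by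
    rw [Finset.card_image_of_injOn hinj, Finset.card_range]
  have := Finset.card_le_card hsub
  omega

variable (V : Finset (Fin 3 → ℕ))

lemma fee_box {i : Fin 3} {w : Fin 3 → ℕ} (hi : IsFEE 3 d V i w) :
    Box u d i w ⊆ Spx u d \ V := by
  intro x hx
  rw [Box, Finset.mem_filter] at hx
  rw [Finset.mem_sdiff]
  exact ⟨hx.1, hi.2 x ((mem_Spx u).1 hx.1).2 hx.2⟩

lemma single_apply (t s : Fin 3) :
    (Pi.single t 1 : Fin 3 → ℕ) s = if s = t then 1 else 0 :=
  Pi.single_apply t 1 s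

lemma sub_single_apply (z : Fin 3 → ℕ) (t s : Fin 3) :
    (z - (Pi.single t 1 : Fin 3 → ℕ)) s = z s - (if s = t then 1 else 0) := by
  simp [Pi.sub_apply, Pi.single_apply]

lemma add_single_apply (z : Fin 3 → ℕ) (t s : Fin 3) :
    (z + (Pi.single t 1 : Fin 3 → ℕ)) s = z s + (if s = t then 1 else 0) := by
  simp [Pi.add_apply, Pi.single_apply]

lemma mem_MV {n : ℕ} {V : Finset (Fin n → ℕ)} {z : Fin n → ℕ} :
    z ∈ mulVarsOn Finset.univ V ↔ ∃ v ∈ V, ∃ t, z = v + Pi.single t 1 := by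
  simp [mulVarsOn, eq_comm]

lemma pt_eq {x bv : Fin 3 → ℕ} (hle : ∀ t, x t ≤ bv t) (hs : ∑ t, x t = ∑ t, bv t) :
    x = bv := by
  rw [Fin.sum_univ_three, Fin.sum_univ_three] at hs
  have h0 := hle 0; have h1 := hle 1; have h2 := hle 2
  funext t
  rcases fin3cases t with rfl | rfl | rfl <;> omega

lemma pt_down {x bv : Fin 3 → ℕ} (hle : ∀ t, x t ≤ bv t)
    (hs : ∑ t, x t + 1 = ∑ t, bv t) :
    ∃ s : Fin 3, 0 < bv s ∧ x = bv - Pi.single s 1 := by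
  rw [Fin.sum_univ_three, Fin.sum_univ_three] at hs
  have h0 := hle 0; have h1 := hle 1; have h2 := hle 2
  have hc : (x 0 + 1 = bv 0 ∧ x 1 = bv 1 ∧ x 2 = bv 2) ∨
      (x 0 = bv 0 ∧ x 1 + 1 = bv 1 ∧ x 2 = bv 2) ∨
      (x 0 = bv 0 ∧ x 1 = bv 1 ∧ x 2 + 1 = bv 2) := by omega
  rcases hc with ⟨e0, e1, e2⟩ | ⟨e0, e1, e2⟩ | ⟨e0, e1, e2⟩
  · refine ⟨0, by omega, ?_⟩
    funext t
    rcases fin3cases t with rfl | rfl | rfl <;> simp [sub_single_apply] <;> omega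
  · refine ⟨1, by omega, ?_⟩
    funext t
    rcases fin3cases t with rfl | rfl | rfl <;> simp [sub_single_apply] <;> omega
  · refine ⟨2, by omega, ?_⟩
    funext t
    rcases fin3cases t with rfl | rfl | rfl <;> simp [sub_single_apply] <;> omega

lemma union_card {α : Type*} [DecidableEq α] {A B W : Finset α}
    (hA : A ⊆ W) (hB : B ⊆ W) : A.card + B.card ≤ W.card + (A ∩ B).card := by
  have h1 := Finset.card_union_add_card_inter A B
  have h2 := Finset.card_le_card (Finset.union_subset hA hB)
  omega

lemma sum_single (t : Fin 3) : ∑ s, (Pi.single t 1 : Fin 3 → ℕ) s = 1 := by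
  rcases fin3cases t with rfl | rfl | rfl <;>
    simp [Fin.sum_univ_three, single_apply]

lemma MV_subset (hu : ∀ v ∈ V, ∀ t, u t ≤ v t) (hdeg : ∀ v ∈ V, ∑ t, v t = d) :
    mulVarsOn Finset.univ V ⊆ Spx u (d+1) := by
  intro z hz
  rw [mem_MV] at hz
  obtain ⟨v, hv, t, rfl⟩ := hz
  rw [mem_Spx]
  constructor
  · intro s
    rw [add_single_apply]
    have := hu v hv s
    omega
  · simp only [Pi.add_apply]
    rw [Finset.sum_add_distrib, hdeg v hv]
    have := sum_single t
    simp only [Pi.single_apply] at this ⊢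
    omega

lemma mem_W2 (hu : ∀ v ∈ V, ∀ t, u t ≤ v t) {z : Fin 3 → ℕ}
    (hz : z ∈ Spx u (d+1)) :
    z ∉ mulVarsOn Finset.univ V ↔
      ∀ t, u t < z t → z - Pi.single t 1 ∈ Spx u d \ V := by
  obtain ⟨hzu, hzs⟩ := (mem_Spx u).1 hz
  constructor
  · intro hnm t ht
    rw [Finset.mem_sdiff]
    have hsub := sub_single_apply z t
    constructor
    · rw [mem_Spx]
      constructor
      · intro s
        rw [hsub s]
        have := hzu s
        by_cases h : s = t
        · subst h; simp; omega
        · simp [h]; omega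
      · rw [sum3 z t] at hzs
        rw [sum3 _ t]
        rw [hsub t, hsub (o1 t), hsub (o2 t)]
        simp [o1_ne t, o2_ne t]
        omega
    · intro hmem
      apply hnm
      rw [mem_MV]
      refine ⟨z - Pi.single t 1, hmem, t, ?_⟩
      funext s
      rw [add_single_apply, hsub s]
      by_cases h : s = t
      · subst h; simp; omega
      · simp [h]
  · intro hall hmem
    rw [mem_MV] at hmem
    obtain ⟨v, hv, t, rfl⟩ := hmem
    have h1 : u t < (v + Pi.single t 1 : Fin 3 → ℕ) t := by
      rw [add_single_apply]
      have := hu v hv t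
      simp
      omega
    have h2 := hall t h1
    rw [Finset.mem_sdiff] at h2
    apply h2.2
    have h3 : v + Pi.single t 1 - Pi.single t 1 = v := by
      funext s
      rw [sub_single_apply, add_single_apply]
      omega
    rwa [h3]

lemma third_exists : ∀ i l : Fin 3, i ≠ l →
    ∃ m, m ≠ i ∧ m ≠ l ∧ ∀ s : Fin 3, s = i ∨ s = l ∨ s = m := by decide

lemma sum3' (f : Fin 3 → ℕ) {i l m : Fin 3} (h1 : i ≠ l) (h2 : m ≠ i) (h3 : m ≠ l) :
    ∑ t, f t = f i + f l + f m := by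
  rcases fin3cases i with rfl | rfl | rfl <;> rcases fin3cases l with rfl | rfl | rfl <;>
    rcases fin3cases m with rfl | rfl | rfl <;> simp_all [Fin.sum_univ_three] <;> ring

lemma card_triple {α : Type*} [DecidableEq α] (a b c : α) :
    ({a, b, c} : Finset α).card ≤ 3 := by
  have h1 := Finset.card_insert_le a ({b, c} : Finset α)
  have h2 := Finset.card_insert_le b ({c} : Finset α)
  simp at h1 h2
  omega

lemma card_pair {α : Type*} [DecidableEq α] (a b : α) :
    ({a, b} : Finset α).card ≤ 2 := by
  have h1 := Finset.card_insert_le a ({b} : Finset α)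
  simp at h1
  omega

lemma sub_mem_spx {m : ℕ} {z : Fin 3 → ℕ} (hz : z ∈ Spx u (m+1)) (t : Fin 3)
    (ht : u t < z t) : z - Pi.single t 1 ∈ Spx u m := by
  obtain ⟨hzu, hzs⟩ := (mem_Spx u).1 hz
  rw [mem_Spx]
  have hsub := sub_single_apply z t
  constructor
  · intro s
    rw [hsub s]
    have := hzu s
    by_cases h : s = t
    · subst h; simp; omega
    · simp [h]; omega
  · rw [sum3 _ t, hsub t, hsub (o1 t), hsub (o2 t)]
    rw [sum3 z t] at hzs
    simp [o1_ne t, o2_ne t]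
    omega

section Main

variable {u : Fin 3 → ℕ} {d : ℕ} {V : Finset (Fin 3 → ℕ)}

/-- `φ` is well defined : `w + x_i ∈ W'` for `w ∈ W` FEE for `i`. -/
lemma phi_mem (hu : ∀ v ∈ V, ∀ t, u t ≤ v t)
    {w : Fin 3 → ℕ} {i : Fin 3} (hw : w ∈ Spx u d \ V) (hi : IsFEE 3 d V i w) :
    w + Pi.single i 1 ∈ Spx u (d+1) \ mulVarsOn Finset.univ V := by
  rw [Finset.mem_sdiff] at hw
  obtain ⟨hwS, hwV⟩ := hw
  obtain ⟨hwu, hws⟩ := (mem_Spx u).1 hwS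
  have hadd := add_single_apply w i
  have hzS : w + Pi.single i 1 ∈ Spx u (d+1) := by
    rw [mem_Spx]
    constructor
    · intro s; rw [hadd s]; have := hwu s; omega
    · simp only [Pi.add_apply]
      rw [Finset.sum_add_distrib, hws]
      have := sum_single i
      omega
  rw [Finset.mem_sdiff]
  refine ⟨hzS, (mem_W2 u d V hu hzS).2 ?_⟩
  intro t ht
  by_cases hti : t = i
  · subst hti
    have : w + Pi.single t 1 - Pi.single t 1 = w := by
      funext s
      rw [sub_single_apply, add_single_apply]
      omega
    rw [this, Finset.mem_sdiff]
    exact ⟨hwS, hwV⟩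
  · have hwt : u t < w t := by
      rw [hadd t] at ht
      simp [hti] at ht
      exact ht
    have hxa : ∀ s, ((w + Pi.single i 1 - Pi.single t 1 : Fin 3 → ℕ)) s
        = w s + (if s = i then 1 else 0) - (if s = t then 1 else 0) := fun s => by
      rw [sub_single_apply, add_single_apply]
    rw [Finset.mem_sdiff]
    obtain ⟨m, hmi, hmt, htri⟩ := third_exists i t (Ne.symm hti)
    have hws3 : w i + w t + w m = d := by
      rw [← sum3' w (Ne.symm hti) hmi hmt, hws]
    constructor
    · rw [mem_Spx]
      constructor
      · intro s
        rw [hxa s]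
        have := hwu s
        by_cases h1 : s = t
        · subst h1; simp [hti]; omega
        · simp [h1]; omega
      · rw [sum3' _ (Ne.symm hti) hmi hmt, hxa i, hxa t, hxa m]
        simp [hti, Ne.symm hti, hmi, hmt]
        omega
    · apply hi.2
      · rw [sum3' _ (Ne.symm hti) hmi hmt, hxa i, hxa t, hxa m]
        simp [hti, Ne.symm hti, hmi, hmt]
        omega
      · intro s hs
        rw [hxa s]
        simp only [if_neg hs]
        omega

/-- `φ` is injective (two distinct FEE directions lead to a contradiction). -/
lemma phi_inj_case (hWle : (Spx u d \ V).card ≤ d - (u 0 + u 1 + u 2))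
    {w w' : Fin 3 → ℕ} {i l : Fin 3}
    (hw : w ∈ Spx u d \ V) (hw' : w' ∈ Spx u d \ V)
    (hi : IsFEE 3 d V i w) (hl : IsFEE 3 d V l w')
    (hil : i ≠ l) (heq : w + Pi.single i 1 = w' + Pi.single l 1) : False := by
  obtain ⟨hwS, hwV⟩ := Finset.mem_sdiff.1 hw
  obtain ⟨hw'S, hw'V⟩ := Finset.mem_sdiff.1 hw'
  obtain ⟨hwu, hws⟩ := (mem_Spx u).1 hwS
  obtain ⟨hw'u, hw's⟩ := (mem_Spx u).1 hw'S
  obtain ⟨m, hmi, hml, htri⟩ := third_exists i l hil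
  have hco : ∀ s, w s + (if s = i then 1 else 0) = w' s + (if s = l then 1 else 0) :=
    fun s => by
      have := congrFun heq s
      rw [add_single_apply, add_single_apply] at this
      exact this
  have e1 : w' i = w i + 1 := by have := hco i; simp [hil] at this; omega
  have e2 : w l = w' l + 1 := by have := hco l; simp [Ne.symm hil] at this; omega
  have e3 : w m = w' m := by have := hco m; simp [hmi, hml] at this; omega
  have hws3 : w i + w l + w m = d := by rw [← sum3' w hil hmi hml, hws]
  have hw's3 : w' i + w' l + w' m = d := by rw [← sum3' w' hil hmi hml, hw's]
  have husum : u 0 + u 1 + u 2 = u i + u l + u m := by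
    have := sum3' u hil hmi hml; rw [Fin.sum_univ_three] at this; omega
  have hB1 := fee_box u d V hi
  have hB2 := fee_box u d V hl
  have LB1 := box_lb u d i w hwS
  have LB2 := box_lb u d l w' hw'S
  have hUC := union_card hB1 hB2
  -- intersection analysis
  have hint : ∀ x ∈ Box u d i w ∩ Box u d l w', ∃ s : Fin 3,
      0 < (w + Pi.single i 1 : Fin 3 → ℕ) s ∧ x = w + Pi.single i 1 - Pi.single s 1 := by
    intro x hx
    rw [Finset.mem_inter, Box, Box, Finset.mem_filter, Finset.mem_filter] at hx
    obtain ⟨⟨hxS, hxb1⟩, _, hxb2⟩ := hx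
    obtain ⟨hxu, hxs⟩ := (mem_Spx u).1 hxS
    have hadd := add_single_apply w i
    have bi := hxb2 i hil
    have blx := hxb1 l (Ne.symm hil)
    have bmx := hxb1 m hmi
    have ble : ∀ s, x s ≤ (w + Pi.single i 1 : Fin 3 → ℕ) s := by
      intro s
      rw [hadd s]
      rcases htri s with h | h | h <;> rw [h]
      · simp
        omega
      · simp [Ne.symm hil]
        omega
      · simp [hmi]
        omega
    have hsums : ∑ t, x t + 1 = ∑ t, (w + Pi.single i 1 : Fin 3 → ℕ) t := by
      have h1 : ∑ t, (w + Pi.single i 1 : Fin 3 → ℕ) t = d + 1 := by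
        simp only [Pi.add_apply]
        rw [Finset.sum_add_distrib, hws]
        have := sum_single i
        omega
      omega
    exact pt_down ble hsums
  -- membership in Spx of intersection elements
  have hintS : ∀ x ∈ Box u d i w ∩ Box u d l w', x ∈ Spx u d := fun x hx =>
    box_subset_spx u d i w (Finset.mem_inter.1 hx).1
  by_cases hm : u m < w m
  · have hsub : Box u d i w ∩ Box u d l w' ⊆
        {w + Pi.single i 1 - Pi.single i 1, w + Pi.single i 1 - Pi.single l 1,
          w + Pi.single i 1 - Pi.single m 1} := by
      intro x hx
      obtain ⟨s, hs, rfl⟩ := hint x hx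
      rcases htri s with h | h | h <;> rw [h] <;> simp
    have hc3 := (Finset.card_le_card hsub).trans (card_triple _ _ _)
    have hwui := hwu i; have hwul := hwu l; have hwum := hwu m
    have hw'ul := hw'u l
    omega
  · have hsub : Box u d i w ∩ Box u d l w' ⊆
        {w + Pi.single i 1 - Pi.single i 1, w + Pi.single i 1 - Pi.single l 1} := by
      intro x hx
      obtain ⟨s, hs, hxe⟩ := hint x hx
      have hxS := hintS x hx
      obtain ⟨hxu, _⟩ := (mem_Spx u).1 hxS
      rcases htri s with h | h | h
      · rw [h] at hxe; subst hxe; simp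
      · rw [h] at hxe; subst hxe; simp
      · exfalso
        rw [h] at hxe hs
        have h1 := hxu m
        rw [hxe] at h1
        rw [sub_single_apply, add_single_apply] at h1
        simp [hmi] at h1
        have := hwu m
        rw [add_single_apply] at hs
        simp [hmi] at hs
        omega
    have hc2 := (Finset.card_le_card hsub).trans (card_pair _ _)
    have hwui := hwu i; have hwul := hwu l; have hwum := hwu m
    have hw'ul := hw'u l
    omega

/-- every element of `W'` has a base direction. -/
lemma exists_base (hu : ∀ v ∈ V, ∀ t, u t ≤ v t)
    (hfee : ∀ w : Fin 3 → ℕ, (∑ t, w t = d) → w ∉ V → ∃ i : Fin 3, IsFEE 3 d V i w)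
    (hWle : (Spx u d \ V).card ≤ d - (u 0 + u 1 + u 2))
    (hEd : u 0 + u 1 + u 2 ≤ d)
    {z : Fin 3 → ℕ} (hz : z ∈ Spx u (d+1) \ mulVarsOn Finset.univ V) :
    ∃ i, u i < z i ∧ Box u d i (z - Pi.single i 1) ⊆ Spx u d \ V := by
  obtain ⟨hzS, hzM⟩ := Finset.mem_sdiff.1 hz
  obtain ⟨hzu, hzs⟩ := (mem_Spx u).1 hzS
  have hall := (mem_W2 u d V hu hzS).1 hzM
  -- some coordinate exceeds u
  have hex : ∃ t, u t < z t := by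
    by_contra hc
    push_neg at hc
    have h1 : ∑ t, z t ≤ ∑ t, u t := Finset.sum_le_sum (fun t _ => hc t)
    rw [hzs, Fin.sum_univ_three] at h1
    omega
  obtain ⟨t, ht⟩ := hex
  have hwW := hall t ht
  obtain ⟨hwS, hwV⟩ := Finset.mem_sdiff.1 hwW
  obtain ⟨hwu, hws⟩ := (mem_Spx u).1 hwS
  obtain ⟨i, hiF⟩ := hfee _ hws hwV
  by_cases hti : t = i
  · subst hti
    exact ⟨t, ht, fee_box u d V hiF⟩
  · -- w := z - e_t, FEE for i ≠ t
    have hsub := sub_single_apply z t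
    have hwi : ((z - Pi.single t 1 : Fin 3 → ℕ)) i = z i := by
      rw [hsub i, if_neg (show ¬ i = t from fun hh => hti hh.symm)]
      omega
    have hBi := fee_box u d V hiF
    have LB1 := box_lb u d i (z - Pi.single t 1) hwS
    have hBcard := Finset.card_le_card hBi
    have hzi : u i < z i := by
      have hui := hwu i
      rw [hwi] at hui
      omega
    have hw2W := hall i hzi
    obtain ⟨hw2S, hw2V⟩ := Finset.mem_sdiff.1 hw2W
    obtain ⟨hw2u, hw2s⟩ := (mem_Spx u).1 hw2S
    obtain ⟨l, hlF⟩ := hfee _ hw2s hw2V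
    by_cases hli : l = i
    · subst hli
      exact ⟨l, hzi, fee_box u d V hlF⟩
    · exfalso
      obtain ⟨m, hmi, hml, htri⟩ := third_exists i l (Ne.symm hli)
      have hsub2 := sub_single_apply z i
      have hB2 := fee_box u d V hlF
      have LB2 := box_lb u d l (z - Pi.single i 1) hw2S
      have hUC := union_card hBi hB2
      -- the two boxes are disjoint
      have hint : Box u d i (z - Pi.single t 1) ∩ Box u d l (z - Pi.single i 1) = ∅ := by
        rw [Finset.eq_empty_iff_forall_notMem]
        intro x hx
        rw [Finset.mem_inter, Box, Box, Finset.mem_filter, Finset.mem_filter] at hx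
        obtain ⟨⟨hxS, hxb1⟩, _, hxb2⟩ := hx
        obtain ⟨hxu, hxs⟩ := (mem_Spx u).1 hxS
        have hxsum : x i + x l + x m = d := by rw [← sum3' x (Ne.symm hli) hmi hml, hxs]
        have hzsum : z i + z l + z m = d + 1 := by rw [← sum3' z (Ne.symm hli) hmi hml, hzs]
        have bxi : x i ≤ z i - 1 := by
          have := hxb2 i (Ne.symm hli)
          rw [hsub2 i] at this
          simp at this
          omega
        have bxl : x l ≤ z l - (if l = t then 1 else 0) := by
          have := hxb1 l (fun hh => hli hh)
          rw [hsub l] at this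
          exact this
        have bxm : x m ≤ z m - (if m = t then 1 else 0) := by
          have := hxb1 m hmi
          rw [hsub m] at this
          exact this
        -- t is l or m
        rcases htri t with h | h | h
        · exact hti h
        · rw [show (if l = t then 1 else 0) = 1 from if_pos h.symm] at bxl
          rw [show (if m = t then 1 else 0) = 0 from
            if_neg (fun hh => hml (hh.trans h))] at bxm
          have hz1 : z t = z l := by rw [h]
          omega
        · rw [show (if l = t then 1 else 0) = 0 from
            if_neg (fun hh => hml (hh.trans h).symm)] at bxl
          rw [show (if m = t then 1 else 0) = 1 from if_pos h.symm] at bxm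
          have hz1 : z t = z m := by rw [h]
          omega
      have husum : u 0 + u 1 + u 2 = u i + u l + u m := by
        have := sum3' u (Ne.symm hli) hmi hml; rw [Fin.sum_univ_three] at this; omega
      have hzsum : z i + z l + z m = d + 1 := by
        rw [← sum3' z (Ne.symm hli) hmi hml, hzs]
      have hw2l : ((z - Pi.single i 1 : Fin 3 → ℕ)) l = z l := by
        rw [hsub2 l]; simp [hli]
      have hintc : (Box u d i (z - Pi.single t 1) ∩ Box u d l (z - Pi.single i 1)).card = 0 := by
        rw [hint]; simp
      have hui := hzu i; have hul := hzu l; have hum := hzu m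
      rw [hwi] at LB1
      rw [hw2l] at LB2
      omega

/-- `ψ` is injective. -/
lemma psi_inj_case (hWle : (Spx u d \ V).card ≤ d - (u 0 + u 1 + u 2))
    {z z' : Fin 3 → ℕ} {i l : Fin 3}
    (hz : z ∈ Spx u (d+1)) (hz' : z' ∈ Spx u (d+1))
    (hbi : u i < z i) (hBi : Box u d i (z - Pi.single i 1) ⊆ Spx u d \ V)
    (hbl : u l < z' l) (hBl : Box u d l (z' - Pi.single l 1) ⊆ Spx u d \ V)
    (hil : i ≠ l) (heq : z - Pi.single i 1 = z' - Pi.single l 1) : False := by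
  obtain ⟨hzu, hzs⟩ := (mem_Spx u).1 hz
  obtain ⟨hz'u, hz's⟩ := (mem_Spx u).1 hz'
  obtain ⟨m, hmi, hml, htri⟩ := third_exists i l hil
  have hsub := sub_single_apply z i
  have hsub' := sub_single_apply z' l
  have hco : ∀ s, z s - (if s = i then 1 else 0) = z' s - (if s = l then 1 else 0) :=
    fun s => by
      have := congrFun heq s
      rw [hsub s, hsub' s] at this
      exact this
  have e1 : z' i = z i - 1 := by have := hco i; simp [hil] at this; omega
  have e2 : z' l = z l + 1 := by
    have := hco l; simp [Ne.symm hil] at this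
    have := hz'u l
    omega
  have e3 : z' m = z m := by have := hco m; simp [hmi, hml] at this; omega
  have hzS : z - Pi.single i 1 ∈ Spx u d := sub_mem_spx u hz i hbi
  have hz'S : z' - Pi.single l 1 ∈ Spx u d := sub_mem_spx u hz' l hbl
  have LB1 := box_lb u d i (z - Pi.single i 1) hzS
  have LB2 := box_lb u d l (z' - Pi.single l 1) hz'S
  have hUC := union_card hBi hBl
  have hei : ((z - Pi.single i 1 : Fin 3 → ℕ)) i = z i - 1 := by rw [hsub i]; simp
  have hel : ((z' - Pi.single l 1 : Fin 3 → ℕ)) l = z' l - 1 := by rw [hsub' l]; simp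
  -- intersection is at most a single point
  have hint : Box u d i (z - Pi.single i 1) ∩ Box u d l (z' - Pi.single l 1)
      ⊆ {z - Pi.single i 1} := by
    intro x hx
    rw [Finset.mem_inter, Box, Box, Finset.mem_filter, Finset.mem_filter] at hx
    obtain ⟨⟨hxS, hxb1⟩, _, hxb2⟩ := hx
    obtain ⟨hxu, hxs⟩ := (mem_Spx u).1 hxS
    have ble : ∀ s, x s ≤ ((z - Pi.single i 1 : Fin 3 → ℕ)) s := by
      intro s
      rw [hsub s]
      by_cases hsi : s = i
      · have h2 := hxb2 s (by rw [hsi]; exact hil)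
        rw [hsub' s] at h2
        have h3 := hco s
        omega
      · have h2 := hxb1 s hsi
        rw [hsub s] at h2
        omega
    have hsums : ∑ s, x s = ∑ s, ((z - Pi.single i 1 : Fin 3 → ℕ)) s := by
      rw [hxs, ((mem_Spx u).1 hzS).2]
    rw [Finset.mem_singleton]
    exact pt_eq ble hsums
  have hintc := (Finset.card_le_card hint).trans (by simp : ({z - Pi.single i 1} : Finset (Fin 3 → ℕ)).card ≤ 1)
  have hzsum : z i + z l + z m = d + 1 := by rw [← sum3' z hil hmi hml, hzs]
  have husum : u 0 + u 1 + u 2 = u i + u l + u m := by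
    have := sum3' u hil hmi hml; rw [Fin.sum_univ_three] at this; omega
  have hui := hzu i; have hul := hzu l; have hum := hzu m
  rw [hei] at LB1
  rw [hel, e2] at LB2
  omega

end Main

noncomputable def fdir (d : ℕ) (V : Finset (Fin 3 → ℕ)) (w : Fin 3 → ℕ) : Fin 3 :=
  @dite _ (∃ i, IsFEE 3 d V i w) (Classical.dec _) (fun h => h.choose) (fun _ => 0)

lemma fdir_spec {d : ℕ} {V : Finset (Fin 3 → ℕ)} {w : Fin 3 → ℕ}
    (h : ∃ i, IsFEE 3 d V i w) : IsFEE 3 d V (fdir d V w) w := by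
  rw [fdir, dif_pos h]
  exact h.choose_spec

noncomputable def bdir (u : Fin 3 → ℕ) (d : ℕ) (V : Finset (Fin 3 → ℕ))
    (z : Fin 3 → ℕ) : Fin 3 :=
  @dite _ (∃ i, u i < z i ∧ Box u d i (z - Pi.single i 1) ⊆ Spx u d \ V)
    (Classical.dec _) (fun h => h.choose) (fun _ => 0)

lemma bdir_spec {u : Fin 3 → ℕ} {d : ℕ} {V : Finset (Fin 3 → ℕ)} {z : Fin 3 → ℕ}
    (h : ∃ i, u i < z i ∧ Box u d i (z - Pi.single i 1) ⊆ Spx u d \ V) :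
    u (bdir u d V z) < z (bdir u d V z) ∧
      Box u d (bdir u d V z) (z - Pi.single (bdir u d V z) 1) ⊆ Spx u d \ V := by
  rw [bdir, dif_pos h]
  exact h.choose_spec

lemma W2_card_eq {u : Fin 3 → ℕ} {d : ℕ} {V : Finset (Fin 3 → ℕ)}
    (hu : ∀ v ∈ V, ∀ t, u t ≤ v t)
    (hfee : ∀ w : Fin 3 → ℕ, (∑ t, w t = d) → w ∉ V → ∃ i : Fin 3, IsFEE 3 d V i w)
    (hWle : (Spx u d \ V).card ≤ d - (u 0 + u 1 + u 2))
    (hEd : u 0 + u 1 + u 2 ≤ d) :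
    (Spx u (d+1) \ mulVarsOn Finset.univ V).card = (Spx u d \ V).card := by
  apply le_antisymm
  · -- ψ : W' → W
    apply Finset.card_le_card_of_injOn (fun z => z - Pi.single (bdir u d V z) 1)
    · intro z hz
      have hex := exists_base hu hfee hWle hEd hz
      obtain ⟨hb1, hb2⟩ := bdir_spec hex
      apply hb2
      rw [Box, Finset.mem_filter]
      obtain ⟨hzS, _⟩ := Finset.mem_sdiff.1 hz
      exact ⟨sub_mem_spx u hzS _ hb1, fun t _ => le_refl _⟩
    · intro z hz z' hz' heq0
      have heq : z - Pi.single (bdir u d V z) 1 = z' - Pi.single (bdir u d V z') 1 := heq0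
      rw [Finset.mem_coe] at hz hz'
      have hex := exists_base hu hfee hWle hEd hz
      have hex' := exists_base hu hfee hWle hEd hz'
      obtain ⟨hb1, hb2⟩ := bdir_spec hex
      obtain ⟨hb1', hb2'⟩ := bdir_spec hex'
      by_cases hil : bdir u d V z = bdir u d V z'
      · rw [hil] at heq hb1 hb2
        funext s
        have h1 := congrFun heq s
        rw [sub_single_apply, sub_single_apply] at h1
        by_cases hs : s = bdir u d V z'
        · rw [if_pos hs] at h1
          subst hs
          omega
        · rw [if_neg hs] at h1
          omega
      · exact absurd heq (fun heq => psi_inj_case hWle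
          (Finset.mem_sdiff.1 hz).1 (Finset.mem_sdiff.1 hz').1
          hb1 hb2 hb1' hb2' hil heq)
  · -- φ : W → W'
    apply Finset.card_le_card_of_injOn (fun w => w + Pi.single (fdir d V w) 1)
    · intro w hw
      obtain ⟨hwS, hwV⟩ := Finset.mem_sdiff.1 hw
      have hex : ∃ i, IsFEE 3 d V i w := hfee w ((mem_Spx u).1 hwS).2 hwV
      exact phi_mem hu hw (fdir_spec hex)
    · intro w hw w' hw' heq0
      have heq : w + Pi.single (fdir d V w) 1 = w' + Pi.single (fdir d V w') 1 := heq0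
      rw [Finset.mem_coe] at hw hw'
      obtain ⟨hwS, hwV⟩ := Finset.mem_sdiff.1 hw
      obtain ⟨hw'S, hw'V⟩ := Finset.mem_sdiff.1 hw'
      have hex : ∃ i, IsFEE 3 d V i w := hfee w ((mem_Spx u).1 hwS).2 hwV
      have hex' : ∃ i, IsFEE 3 d V i w' := hfee w' ((mem_Spx u).1 hw'S).2 hw'V
      by_cases hil : fdir d V w = fdir d V w'
      · rw [hil] at heq
        exact add_right_cancel heq
      · exact absurd heq (fun heq => phi_inj_case hWle hw hw'
          (fdir_spec hex) (fdir_spec hex') hil heq)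

end GotzFee

/-- In three variables, if every degree-`d` monomial not in `V` is a fixed empty
element of `V` for some `i` and `|V| > C(d - deg(gcd V) + 1, 2)`, then `V`
is a Gotzmann set. -/
theorem gotzmann_of_fee_three_vars (d : ℕ) (V : Finset (Fin 3 → ℕ))
    (hdeg : ∀ v ∈ V, ∑ j, v j = d)
    (hfee : ∀ w : Fin 3 → ℕ, (∑ j, w j = d) → w ∉ V → ∃ i : Fin 3, IsFEE 3 d V i w)
    (hcard : Nat.choose (d + 1 - ∑ j, gcdMon V j) 2 < V.card) :
    IsGotzmann V := by
  classical
  open GotzFee in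
  set u := gcdMon V with hudef
  have hu : ∀ v ∈ V, ∀ t, u t ≤ v t := fun v hv t =>
    Nat.sInf_le ⟨v, hv, rfl⟩
  rw [Fin.sum_univ_three] at hcard
  have hVpos : 0 < V.card := lt_of_le_of_lt (Nat.zero_le _) hcard
  obtain ⟨v0, hv0⟩ := Finset.card_pos.1 hVpos
  have hEd : u 0 + u 1 + u 2 ≤ d := by
    have h1 : ∑ t, u t ≤ ∑ t, v0 t := Finset.sum_le_sum (fun t _ => hu v0 hv0 t)
    rw [hdeg v0 hv0, Fin.sum_univ_three] at h1
    exact h1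
  have hVsub : V ⊆ Spx u d := fun v hv => (mem_Spx u).2 ⟨fun t => hu v hv t, hdeg v hv⟩
  have hSd := Spx_card u (m := d) hEd
  have hSd1 := Spx_card u (m := d+1) (by omega)
  set N := d - (u 0 + u 1 + u 2) with hN
  have hconv : d + 1 - (u 0 + u 1 + u 2) + 2 = N + 3 := by omega
  rw [hconv] at hSd1
  have hconv2 : d + 1 - (u 0 + u 1 + u 2) = N + 1 := by omega
  rw [hconv2] at hcard
  have hWcard : (Spx u d \ V).card = (Spx u d).card - V.card := Finset.card_sdiff_of_subset hVsub
  have hVle := Finset.card_le_card hVsub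
  have hp1 : (N+2).choose 2 = (N+1).choose 2 + (N+1) := by
    have h : (N+2).choose 2 = (N+1).choose 1 + (N+1).choose 2 :=
      Nat.choose_succ_succ (N+1) 1
    rw [Nat.choose_one_right] at h
    omega
  have hp2 : (N+3).choose 2 = (N+2).choose 2 + (N+2) := by
    have h : (N+3).choose 2 = (N+2).choose 1 + (N+2).choose 2 :=
      Nat.choose_succ_succ (N+2) 1
    rw [Nat.choose_one_right] at h
    omega
  have hWle : (Spx u d \ V).card ≤ N := by omega
  have hMVsub := MV_subset u d V hu hdeg
  have hMVcard : (Spx u (d+1) \ mulVarsOn Finset.univ V).card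
      = (Spx u (d+1)).card - (mulVarsOn Finset.univ V).card := Finset.card_sdiff_of_subset hMVsub
  have hMVle := Finset.card_le_card hMVsub
  have hW2 := W2_card_eq hu hfee hWle hEd
  set s := (Spx u d \ V).card with hs
  have hVval : V.card = (N+2).choose 2 - s := by omega
  have hsle : s ≤ N := hWle
  have hMVval : (mulVarsOn Finset.univ V).card = (N+3).choose 2 - s := by omega
  -- now build the binomial representation
  rw [IsGotzmann, IsGotzmannOn]
  right; right
  have hcu : (Finset.univ : Finset (Fin 3)).card - 1 = 2 := by simp
  rw [hcu]
  by_cases hs0 : s = 0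
  · refine ⟨2, fun _ => N, ⟨one_le_two, le_refl 2, fun j k _ _ _ => le_refl N, ?_⟩, ?_⟩
    · rw [Finset.Icc_self, Finset.sum_singleton]
      show V.card = (N + 2).choose 2
      omega
    · rw [upVal, Finset.Icc_self, Finset.sum_singleton]
      show (mulVarsOn Finset.univ V).card = (N + 2 + 1).choose 2
      have h3 : N + 2 + 1 = N + 3 := by omega
      rw [h3]
      omega
  · have hs1 : 1 ≤ s := by omega
    refine ⟨1, fun j => if j ≤ 1 then N - s else N - 1, ⟨le_refl 1, one_le_two, ?_, ?_⟩, ?_⟩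
    · intro j k h1 h2 h3
      dsimp only
      split_ifs <;> omega
    · have hIcc : Finset.Icc 1 2 = ({1, 2} : Finset ℕ) := by decide
      rw [hIcc, Finset.sum_insert (by decide), Finset.sum_singleton]
      norm_num
      have e1 : N - s + 1 = N + 1 - s := by omega
      have e2 : N - 1 + 2 = N + 1 := by omega
      rw [e2]
      have := Nat.choose_one_right (N - s + 1)
      omega
    · rw [upVal]
      have hIcc : Finset.Icc 1 2 = ({1, 2} : Finset ℕ) := by decide
      rw [hIcc, Finset.sum_insert (by decide), Finset.sum_singleton]
      norm_num
      have e2 : N - 1 + 2 + 1 = N + 2 := by omega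
      rw [e2]
      have := Nat.choose_one_right (N - s + 1 + 1)
      omega
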